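/- Let D, E ∈ HS_k(A; m) be Hasse–Schmidt derivations of length m with D₁ = δ and E₁ = ε. Let F = (D ⊠ E) ∘ (D* ⊠ E*) be the 2-variate Hasse–Schmidt derivation indexed by {β ∈ ℕ² : β ≤ (m,m)}, where (D ⊠ E)_{(i,j)} = D_i ∘ E_j and D*, E* are the inverses of D, E in the Hasse–Schmidt group. Then F_{(0,1)} = 0, F_{(1,0)} = 0, and F_{(1,1)} = δ∘ε − ε∘δ. -/

import Mathlib

/-- A Hasse–Schmidt derivation of length `m`: `D₀ = id` and the Leibniz identities. -/
def IsHS {k A : Type*} [CommRing k] [CommRing A] [Algebra k A]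
    (m : ℕ) (D : ℕ → Module.End k A) : Prop :=
  D 0 = 1 ∧ ∀ n, 1 ≤ n → n ≤ m → ∀ x y : A,
    D n (x * y) = ∑ i ∈ Finset.range (n + 1), D i x * D (n - i) y

/-- Composition: `(D ∘ E)_n = Σ_{i+j=n} D_i ∘ E_j`. -/
def hsComp {k A : Type*} [CommRing k] [CommRing A] [Algebra k A]
    (D E : ℕ → Module.End k A) : ℕ → Module.End k A :=
  fun n => ∑ i ∈ Finset.range (n + 1), D i * E (n - i)

/-- The identity HS-derivation `(id, 0, 0, …)`. -/
def hsOne {k A : Type*} [CommRing k] [CommRing A] [Algebra k A] : ℕ → Module.End k A :=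
  fun n => if n = 0 then 1 else 0

/-- For `F = (D ⊠ E) ∘ (D* ⊠ E*)` (a 2-variate HS-derivation on `{β ≤ (m,m)}`), one has
`F_{(0,1)} = 0`, `F_{(1,0)} = 0` and `F_{(1,1)} = δε − εδ`. -/
theorem commutator_two_variate (k A : Type*) [CommRing k] [CommRing A] [Algebra k A]
    (m : ℕ) (hm : 1 ≤ m) (D E Ds Es : ℕ → Module.End k A) (δ ε : Module.End k A)
    (hD : IsHS m D) (hE : IsHS m E) (hDs : IsHS m Ds) (hEs : IsHS m Es)
    (hD1 : D 1 = δ) (hE1 : E 1 = ε)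
    (hinvD : ∀ n ≤ m, hsComp D Ds n = hsOne n ∧ hsComp Ds D n = hsOne n)
    (hinvE : ∀ n ≤ m, hsComp E Es n = hsOne n ∧ hsComp Es E n = hsOne n) :
    letI F : ℕ × ℕ → Module.End k A := fun p =>
      ∑ a ∈ Finset.range (p.1 + 1), ∑ b ∈ Finset.range (p.2 + 1),
        D a * E b * Ds (p.1 - a) * Es (p.2 - b)
    F (0, 1) = 0 ∧ F (1, 0) = 0 ∧ F (1, 1) = δ * ε - ε * δ := by
  simp only []
  obtain ⟨hD0, -⟩ := hD
  obtain ⟨hE0, -⟩ := hE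
  obtain ⟨hDs0, -⟩ := hDs
  obtain ⟨hEs0, -⟩ := hEs
  have hd1 := (hinvD 1 hm).1
  have he1 := (hinvE 1 hm).1
  simp only [hsComp, hsOne, Finset.sum_range_succ, Finset.sum_range_zero] at hd1 he1
  norm_num [hD0, hE0, hDs0, hEs0] at hd1 he1
  have hDs1 : Ds 1 = -δ := by rw [← hD1]; exact eq_neg_of_add_eq_zero_left hd1
  have hEs1 : Es 1 = -ε := by rw [← hE1]; exact eq_neg_of_add_eq_zero_left he1
  refine ⟨?_, ?_, ?_⟩ <;>
    · simp only [Finset.sum_range_succ, Finset.sum_range_zero]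
      norm_num [hD0, hE0, hDs0, hEs0, hDs1, hEs1, hD1, hE1, sub_eq_add_neg, Module.End.mul_eq_comp, LinearMap.neg_comp, LinearMap.comp_neg, neg_neg]
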